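/- For a quadratic storage function V(x) = x^T P x with P > 0 and dynamics ẋ = Âx + g(x) + u, if 2x^T P g(x) ≤ x^T R x for all x, and the matrix [[−(Â^T P + P Â) − R − ρI, ½I − P],[½I − P, −νI]] is positive semidefinite, then V̇(x) ≤ [u; x]^T [[−νI, ½I],[½I, −ρI]] [u; x] for all x, u, i.e., the system is IF-OFP(ν, ρ) from u to x. -/

import Mathlib

open Matrix

theorem stmt_10 (n : ℕ) (P R Ahat : Matrix (Fin n) (Fin n) ℝ) (hP : P.PosDef)
    (hR : R.IsSymm) (ν ρ : ℝ) (g : (Fin n → ℝ) → (Fin n → ℝ))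
    (hg : ∀ x : Fin n → ℝ, 2 * (x ⬝ᵥ P.mulVec (g x)) ≤ x ⬝ᵥ R.mulVec x)
    (hLMI : (Matrix.fromBlocks
        (-(Ahatᵀ * P + P * Ahat) - R - ρ • (1 : Matrix (Fin n) (Fin n) ℝ))
        ((1 / 2 : ℝ) • (1 : Matrix (Fin n) (Fin n) ℝ) - P)
        ((1 / 2 : ℝ) • (1 : Matrix (Fin n) (Fin n) ℝ) - P)
        (-ν • (1 : Matrix (Fin n) (Fin n) ℝ))).PosSemidef) :
    ∀ x u : Fin n → ℝ,
      2 * (x ⬝ᵥ P.mulVec (Ahat.mulVec x + g x + u)) ≤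
        -ν * (u ⬝ᵥ u) + u ⬝ᵥ x - ρ * (x ⬝ᵥ x) := by
  intro x u
  have hpsd := hLMI.dotProduct_mulVec_nonneg (Sum.elim x u)
  rw [fromBlocks_mulVec] at hpsd
  have hPs : Pᵀ = P := hP.isHermitian.eq
  simp only [star_trivial, Sum.elim_comp_inl, Sum.elim_comp_inr,
    sumElim_dotProduct_sumElim, dotProduct_add, dotProduct_sub, dotProduct_neg,
    dotProduct_smul, smul_eq_mul, Pi.star_apply, sub_mulVec, add_mulVec, neg_mulVec,
    one_mulVec, smul_mulVec, ← mulVec_mulVec] at hpsd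
  have hsymm : ∀ v w : Fin n → ℝ, v ⬝ᵥ P.mulVec w = w ⬝ᵥ P.mulVec v := by
    intro v w
    rw [dotProduct_mulVec, ← mulVec_transpose, hPs, dotProduct_comm]
  have hAP : x ⬝ᵥ Ahatᵀ.mulVec (P.mulVec x) = x ⬝ᵥ P.mulVec (Ahat.mulVec x) := by
    rw [dotProduct_mulVec, ← mulVec_transpose, transpose_transpose]
    rw [dotProduct_comm, hsymm]
    exact dotProduct_comm _ _
  have hgx := hg x
  have h1 := hsymm x u
  have h2 := dotProduct_comm x u
  simp only [dotProduct_add, mulVec_add] at *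
  nlinarith [hpsd, hgx, hAP]
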